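/- Let A be a real symmetric n×n matrix and v ∈ ℝⁿ. Then the eigenvalues of A interlace the eigenvalues of A + vvᵀ; that is, if α₁ ≥ ... ≥ αₙ are the eigenvalues of A + vvᵀ and β₁ ≥ ... ≥ βₙ are the eigenvalues of A, then α₁ ≥ β₁ ≥ α₂ ≥ ... ≥ βₙ₋₁ ≥ αₙ ≥ βₙ. -/

import Mathlib

open Matrix Finset Submodule Module

variable {n : ℕ}

local notation "E" => EuclideanSpace ℝ (Fin n)

private lemma aux_inter (V W : Submodule ℝ (EuclideanSpace ℝ (Fin n)))
    (h : n < finrank ℝ V + finrank ℝ W) : ∃ x : E, x ≠ 0 ∧ x ∈ V ∧ x ∈ W := by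
  have h1 := Submodule.finrank_sup_add_finrank_inf_eq V W
  have h2 : finrank ℝ ↥(V ⊔ W) ≤ n := by
    simpa using Submodule.finrank_le (V ⊔ W)
  have h3 : 0 < finrank ℝ ↥(V ⊓ W) := by omega
  have h4 : V ⊓ W ≠ ⊥ := by
    intro hb
    rw [hb, finrank_bot] at h3; omega
  obtain ⟨x, hx, hx0⟩ := Submodule.exists_mem_ne_zero_of_ne_bot h4
  exact ⟨x, hx0, hx.1, hx.2⟩

private lemma aux_inf_finrank (V W : Submodule ℝ (EuclideanSpace ℝ (Fin n))) :
    finrank ℝ V + finrank ℝ W ≤ n + finrank ℝ ↥(V ⊓ W) := by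
  have h1 := Submodule.finrank_sup_add_finrank_inf_eq V W
  have h2 : finrank ℝ ↥(V ⊔ W) ≤ n := by simpa using Submodule.finrank_le (V ⊔ W)
  omega

private lemma aux_span_dim (b : OrthonormalBasis (Fin n) ℝ (EuclideanSpace ℝ (Fin n)))
    (S : Finset (Fin n)) : finrank ℝ (span ℝ (b '' ↑S)) = S.card := by
  have hli : LinearIndependent ℝ (fun k : (↑S : Set (Fin n)) => b k) :=
    b.orthonormal.linearIndependent.comp _ Subtype.val_injective
  have hr : Set.range (fun k : (↑S : Set (Fin n)) => b k) = b '' ↑S := by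
    rw [← Set.image_eq_range]
  rw [← hr, finrank_span_eq_card hli]
  simp

variable {n : ℕ}

private lemma aux_coeff_zero (b : OrthonormalBasis (Fin n) ℝ (EuclideanSpace ℝ (Fin n)))
    (S : Finset (Fin n)) (x : EuclideanSpace ℝ (Fin n)) (hx : x ∈ span ℝ (b '' ↑S))
    (j : Fin n) (hj : j ∉ S) : (inner ℝ (b j) x : ℝ) = 0 := by
  induction hx using Submodule.span_induction with
  | mem y hy =>
    obtain ⟨k, hk, rfl⟩ := hy
    exact b.orthonormal.2 (fun h => hj (h ▸ hk))
  | zero => simp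
  | add y z _ _ hy hz => rw [inner_add_right, hy, hz, add_zero]
  | smul c y _ hy => rw [inner_smul_right, hy, mul_zero]

private lemma aux_quad (b : OrthonormalBasis (Fin n) ℝ (EuclideanSpace ℝ (Fin n)))
    (μ : Fin n → ℝ) (T : EuclideanSpace ℝ (Fin n) →ₗ[ℝ] EuclideanSpace ℝ (Fin n))
    (hT : ∀ j, T (b j) = μ j • b j) (x : EuclideanSpace ℝ (Fin n)) :
    (inner ℝ x (T x) : ℝ) = ∑ j, μ j * (inner ℝ (b j) x : ℝ) ^ 2 := by
  have hTx : T x = ∑ j, (b.repr x j * μ j) • b j := by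
    conv_lhs => rw [← b.sum_repr x]
    rw [map_sum]
    congr with j
    rw [_root_.map_smul, hT, smul_smul]
  rw [hTx, inner_sum]
  congr with j
  rw [inner_smul_right, b.repr_apply_apply, real_inner_comm x (b j)]
  ring

private lemma aux_norm (b : OrthonormalBasis (Fin n) ℝ (EuclideanSpace ℝ (Fin n)))
    (x : EuclideanSpace ℝ (Fin n)) :
    (inner ℝ x x : ℝ) = ∑ j, (inner ℝ (b j) x : ℝ) ^ 2 := by
  have := aux_quad b (fun _ => 1) LinearMap.id (by simp) x
  simpa using this

private lemma aux_lower (b : OrthonormalBasis (Fin n) ℝ (EuclideanSpace ℝ (Fin n)))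
    (μ : Fin n → ℝ) (T : EuclideanSpace ℝ (Fin n) →ₗ[ℝ] EuclideanSpace ℝ (Fin n))
    (hT : ∀ j, T (b j) = μ j • b j) (S : Finset (Fin n)) (c : ℝ)
    (hc : ∀ j ∈ S, c ≤ μ j) (x : EuclideanSpace ℝ (Fin n)) (hx : x ∈ span ℝ (b '' ↑S)) :
    c * (inner ℝ x x : ℝ) ≤ (inner ℝ x (T x) : ℝ) := by
  rw [aux_quad b μ T hT, aux_norm b, Finset.mul_sum]
  apply Finset.sum_le_sum
  intro j _
  by_cases hj : j ∈ S
  · exact mul_le_mul_of_nonneg_right (hc j hj) (sq_nonneg _)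
  · rw [aux_coeff_zero b S x hx j hj]
    simp

private lemma aux_upper (b : OrthonormalBasis (Fin n) ℝ (EuclideanSpace ℝ (Fin n)))
    (μ : Fin n → ℝ) (T : EuclideanSpace ℝ (Fin n) →ₗ[ℝ] EuclideanSpace ℝ (Fin n))
    (hT : ∀ j, T (b j) = μ j • b j) (S : Finset (Fin n)) (c : ℝ)
    (hc : ∀ j ∈ S, μ j ≤ c) (x : EuclideanSpace ℝ (Fin n)) (hx : x ∈ span ℝ (b '' ↑S)) :
    (inner ℝ x (T x) : ℝ) ≤ c * (inner ℝ x x : ℝ) := by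
  rw [aux_quad b μ T hT, aux_norm b, Finset.mul_sum]
  apply Finset.sum_le_sum
  intro j _
  by_cases hj : j ∈ S
  · exact mul_le_mul_of_nonneg_right (hc j hj) (sq_nonneg _)
  · rw [aux_coeff_zero b S x hx j hj]
    simp

private lemma aux_eigen (M : Matrix (Fin n) (Fin n) ℝ) (hM : M.IsHermitian) (j : Fin n) :
    Matrix.toEuclideanLin M (hM.eigenvectorBasis j) =
      hM.eigenvalues j • hM.eigenvectorBasis j := by
  have h := hM.mulVec_eigenvectorBasis j
  ext i
  exact congrFun h i

private noncomputable def auxF (v : Fin n → ℝ) : EuclideanSpace ℝ (Fin n) →ₗ[ℝ] ℝ where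
  toFun x := ∑ i, v i * x i
  map_add' x y := by simp [mul_add, Finset.sum_add_distrib]
  map_smul' c x := by simp [Finset.mul_sum]; ring_nf; simp [mul_comm, mul_assoc, mul_left_comm]

private lemma aux_quad_split (A : Matrix (Fin n) (Fin n) ℝ) (v : Fin n → ℝ)
    (x : EuclideanSpace ℝ (Fin n)) :
    (inner ℝ x (Matrix.toEuclideanLin (A + Matrix.vecMulVec v v) x) : ℝ) =
      (inner ℝ x (Matrix.toEuclideanLin A x) : ℝ) + (auxF v x) ^ 2 := by
  simp only [PiLp.inner_apply, RCLike.inner_apply, starRingEnd_apply, star_trivial]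
  have h1 : ∀ y : EuclideanSpace ℝ (Fin n), ∀ M : Matrix (Fin n) (Fin n) ℝ, ∀ i,
      (Matrix.toEuclideanLin M y) i = (M *ᵥ y) i := fun y M i => rfl
  simp only [h1]
  simp only [Matrix.add_mulVec, Matrix.mulVec, Matrix.vecMulVec_apply, dotProduct]
  simp only [auxF, LinearMap.coe_mk, AddHom.coe_mk]
  refine (Finset.sum_congr rfl fun i _ => mul_comm _ _).trans (Eq.trans ?_
    (congrArg (· + _) (Finset.sum_congr rfl fun i _ => mul_comm _ _)))
  calc ∑ i, x i * ∑ j, (A + vecMulVec v v) i j * x j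
      = ∑ i, (x i * ∑ j, A i j * x j + ∑ j, (v i * x i) * (v j * x j)) := by
        apply Finset.sum_congr rfl; intro i _
        simp only [Finset.mul_sum]
        rw [← Finset.sum_add_distrib]
        apply Finset.sum_congr rfl; intro j _
        simp only [Matrix.add_apply, Matrix.vecMulVec_apply]
        ring
    _ = (∑ i, x i * ∑ j, A i j * x j) + (∑ i, v i * x i) ^ 2 := by
        rw [Finset.sum_add_distrib, sq, Finset.sum_mul_sum]

private lemma aux_ker (v : Fin n → ℝ) :
    n ≤ finrank ℝ (LinearMap.ker (auxF v)) + 1 := by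
  have h1 := LinearMap.finrank_range_add_finrank_ker (auxF v)
  have h2 : finrank ℝ (EuclideanSpace ℝ (Fin n)) = n := by simp
  have h3 : finrank ℝ (LinearMap.range (auxF v)) ≤ 1 := by
    simpa using Submodule.finrank_le (LinearMap.range (auxF v))
  omega

private lemma aux_ker_apply (v : Fin n → ℝ) (x : EuclideanSpace ℝ (Fin n))
    (hx : x ∈ LinearMap.ker (auxF v)) : auxF v x = 0 := hx

theorem rank_one_update_interlacing
    {n : ℕ} (A : Matrix (Fin n) (Fin n) ℝ) (v : Fin n → ℝ)
    (hA : A.IsHermitian)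
    (hAv : (A + Matrix.vecMulVec v v).IsHermitian)
    (α β : Fin n → ℝ)
    (hα : Antitone α) (hβ : Antitone β)
    (hαeig : ∃ σ : Equiv.Perm (Fin n), α = hAv.eigenvalues ∘ σ)
    (hβeig : ∃ τ : Equiv.Perm (Fin n), β = hA.eigenvalues ∘ τ) :
    (∀ i : Fin n, β i ≤ α i) ∧
      (∀ i : Fin n, ∀ h : (i : ℕ) + 1 < n, α ⟨(i : ℕ) + 1, h⟩ ≤ β i) := by
  obtain ⟨σ, hσ⟩ := hαeig
  obtain ⟨τ, hτ⟩ := hβeig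
  set bA := hA.eigenvectorBasis with hbA
  set bB := hAv.eigenvectorBasis with hbB
  have hTA := aux_eigen A hA
  have hTB := aux_eigen _ hAv
  constructor
  · intro i
    set S1 := (Finset.Iic i).image τ with hS1
    set S2 := (Finset.Ici i).image σ with hS2
    have hcard1 : S1.card = (i : ℕ) + 1 := by
      rw [hS1, Finset.card_image_of_injective _ τ.injective, Fin.card_Iic]
    have hcard2 : S2.card = n - (i : ℕ) := by
      rw [hS2, Finset.card_image_of_injective _ σ.injective, Fin.card_Ici]
    obtain ⟨x, hx0, hxV, hxW⟩ := aux_inter (span ℝ (bA '' ↑S1)) (span ℝ (bB '' ↑S2)) (by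
      rw [aux_span_dim, aux_span_dim, hcard1, hcard2]
      have := i.isLt
      omega)
    have hlow : β i * (inner ℝ x x : ℝ) ≤ (inner ℝ x (Matrix.toEuclideanLin A x) : ℝ) := by
      apply aux_lower bA hA.eigenvalues _ hTA S1 (β i) _ x hxV
      intro j hj
      rw [hS1] at hj
      obtain ⟨k, hk, rfl⟩ := Finset.mem_image.mp hj
      simpa [hτ] using hβ (Finset.mem_Iic.mp hk)
    have hup : (inner ℝ x (Matrix.toEuclideanLin (A + Matrix.vecMulVec v v) x) : ℝ) ≤
        α i * (inner ℝ x x : ℝ) := by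
      apply aux_upper bB hAv.eigenvalues _ hTB S2 (α i) _ x hxW
      intro j hj
      rw [hS2] at hj
      obtain ⟨k, hk, rfl⟩ := Finset.mem_image.mp hj
      simpa [hσ] using hα (Finset.mem_Ici.mp hk)
    have hmid : (inner ℝ x (Matrix.toEuclideanLin A x) : ℝ) ≤
        (inner ℝ x (Matrix.toEuclideanLin (A + Matrix.vecMulVec v v) x) : ℝ) := by
      rw [aux_quad_split]
      nlinarith [sq_nonneg (auxF v x)]
    have hpos : 0 < (inner ℝ x x : ℝ) :=
      lt_of_le_of_ne real_inner_self_nonneg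
        (fun hc => hx0 ((@inner_self_eq_zero ℝ _ _ _ _ x).mp hc.symm))
    have := hlow.trans (hmid.trans hup)
    exact le_of_mul_le_mul_right (by linarith) hpos
  · intro i h
    set i' : Fin n := ⟨(i : ℕ) + 1, h⟩ with hi'
    set SB := (Finset.Iic i').image σ with hSB
    set SA := (Finset.Ici i).image τ with hSA
    have hcardB : SB.card = (i : ℕ) + 2 := by
      rw [hSB, Finset.card_image_of_injective _ σ.injective, Fin.card_Iic]
    have hcardA : SA.card = n - (i : ℕ) := by
      rw [hSA, Finset.card_image_of_injective _ τ.injective, Fin.card_Ici]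
    have hWK : (i : ℕ) + 1 ≤ finrank ℝ ↥(span ℝ (bB '' ↑SB) ⊓ LinearMap.ker (auxF v)) := by
      have h1 := aux_inf_finrank (span ℝ (bB '' ↑SB)) (LinearMap.ker (auxF v))
      have h2 := aux_ker v
      rw [aux_span_dim, hcardB] at h1
      omega
    obtain ⟨x, hx0, hxWK, hxV⟩ := aux_inter (span ℝ (bB '' ↑SB) ⊓ LinearMap.ker (auxF v)) (span ℝ (bA '' ↑SA)) (by
      rw [aux_span_dim, hcardA]
      have := i.isLt
      omega)
    have hlow : α i' * (inner ℝ x x : ℝ) ≤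
        (inner ℝ x (Matrix.toEuclideanLin (A + Matrix.vecMulVec v v) x) : ℝ) := by
      apply aux_lower bB hAv.eigenvalues _ hTB SB (α i') _ x hxWK.1
      intro j hj
      rw [hSB] at hj
      obtain ⟨k, hk, rfl⟩ := Finset.mem_image.mp hj
      simpa [hσ] using hα (Finset.mem_Iic.mp hk)
    have hup : (inner ℝ x (Matrix.toEuclideanLin A x) : ℝ) ≤ β i * (inner ℝ x x : ℝ) := by
      apply aux_upper bA hA.eigenvalues _ hTA SA (β i) _ x hxV
      intro j hj
      rw [hSA] at hj
      obtain ⟨k, hk, rfl⟩ := Finset.mem_image.mp hj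
      simpa [hτ] using hβ (Finset.mem_Ici.mp hk)
    have hmid : (inner ℝ x (Matrix.toEuclideanLin (A + Matrix.vecMulVec v v) x) : ℝ) =
        (inner ℝ x (Matrix.toEuclideanLin A x) : ℝ) := by
      rw [aux_quad_split, aux_ker_apply v x hxWK.2]
      simp
    have hpos : 0 < (inner ℝ x x : ℝ) :=
      lt_of_le_of_ne real_inner_self_nonneg
        (fun hc => hx0 ((@inner_self_eq_zero ℝ _ _ _ _ x).mp hc.symm))
    rw [hmid] at hlow
    have := hlow.trans hup
    exact le_of_mul_le_mul_right (by linarith) hpos
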